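/- For k ∈ ℕ let r(k) denote the number of 5-tuples (a,b,c,d,e) ∈ ℕ⁵ with 2a + 10b + 12c + 14d + 36e = k and d ≤ 2. Let c(k) = ⌊k/12⌋ + 1. Then for every even k ≥ 10 with k mod 12 ≠ 0 and k mod 12 ≠ 2 one has r(k) − r(k−10) = c(k)·(c(k)+1)/2. -/

import Mathlib

open Finset

private def Sbox (k : ℕ) : Finset (ℕ × ℕ × ℕ × ℕ × ℕ) :=
  (range (k+1) ×ˢ range (k+1) ×ˢ range (k+1) ×ˢ range (k+1) ×ˢ range (k+1)).filter
    (fun v => 2 * v.1 + 10 * v.2.1 + 12 * v.2.2.1 + 14 * v.2.2.2.1 + 36 * v.2.2.2.2 = k ∧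
      v.2.2.2.1 ≤ 2)

private lemma mem_Sbox (k : ℕ) (v : ℕ × ℕ × ℕ × ℕ × ℕ) :
    v ∈ Sbox k ↔ 2 * v.1 + 10 * v.2.1 + 12 * v.2.2.1 + 14 * v.2.2.2.1 + 36 * v.2.2.2.2 = k ∧
      v.2.2.2.1 ≤ 2 := by
  obtain ⟨a, b, c, d, e⟩ := v
  simp only [Sbox, mem_filter, mem_product, mem_range]
  constructor
  · rintro ⟨-, h⟩; exact h
  · rintro ⟨h1, h2⟩
    refine ⟨⟨?_, ?_, ?_, ?_, ?_⟩, h1, h2⟩ <;> omega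

private lemma card_Sbox (k : ℕ) (r : ℕ → ℕ)
    (hr : ∀ k, r k = Nat.card {v : ℕ × ℕ × ℕ × ℕ × ℕ //
      2 * v.1 + 10 * v.2.1 + 12 * v.2.2.1 + 14 * v.2.2.2.1 + 36 * v.2.2.2.2 = k ∧
      v.2.2.2.1 ≤ 2}) : r k = (Sbox k).card := by
  rw [hr, ← Nat.card_eq_finsetCard]
  exact Nat.card_congr (Equiv.subtypeEquivRight (fun v => (mem_Sbox k v).symm))

private def tri (q : ℕ) : Finset (ℕ × ℕ) :=
  (range (q+1) ×ˢ range (q+1)).filter (fun p => p.1 + p.2 ≤ q)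

private lemma mem_tri (q : ℕ) (p : ℕ × ℕ) : p ∈ tri q ↔ p.1 + p.2 ≤ q := by
  obtain ⟨x, y⟩ := p
  simp only [tri, mem_filter, mem_product, mem_range]
  omega

private lemma card_tri2 (q : ℕ) : 2 * (tri q).card = (q + 1) * (q + 2) := by
  induction q with
  | zero => decide
  | succ n ih =>
    have h : tri (n+1) = tri n ∪ (Finset.HasAntidiagonal.antidiagonal (n+1)) := by
      ext p
      simp only [mem_union, mem_tri, Finset.HasAntidiagonal.mem_antidiagonal]
      omega
    have hd : Disjoint (tri n) (Finset.HasAntidiagonal.antidiagonal (n+1)) := by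
      rw [Finset.disjoint_left]
      intro p hp hp'
      rw [mem_tri] at hp
      rw [Finset.HasAntidiagonal.mem_antidiagonal] at hp'
      omega
    rw [h, Finset.card_union_of_disjoint hd, Finset.Nat.card_antidiagonal, Nat.mul_add, ih]
    ring

/-- For `r(k) = #{(a,b,c,d,e) ∈ ℕ⁵ : 2a + 10b + 12c + 14d + 36e = k, d ≤ 2}` and
`c(k) = ⌊k/12⌋ + 1`, for every even `k ≥ 10` with `k mod 12 ∉ {0, 2}` one has
`r(k) − r(k−10) = c(k)(c(k)+1)/2`. -/
theorem r_difference_formula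
    (r : ℕ → ℕ)
    (hr : ∀ k, r k = Nat.card {v : ℕ × ℕ × ℕ × ℕ × ℕ //
      2 * v.1 + 10 * v.2.1 + 12 * v.2.2.1 + 14 * v.2.2.2.1 + 36 * v.2.2.2.2 = k ∧
      v.2.2.2.1 ≤ 2})
    (c : ℕ → ℕ) (hc : ∀ k, c k = k / 12 + 1)
    (k : ℕ) (hk : Even k) (hk10 : 10 ≤ k) (h0 : k % 12 ≠ 0) (h2 : k % 12 ≠ 2) :
    r k - r (k - 10) = c k * (c k + 1) / 2 := by
  have hke : k % 2 = 0 := Nat.even_iff.mp hk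
  have hs : k % 12 = 4 ∨ k % 12 = 6 ∨ k % 12 = 8 ∨ k % 12 = 10 := by omega
  -- split Sbox k by whether b = 0
  have hsplit :
      ((Sbox k).filter (fun v => v.2.1 = 0)).card
        + ((Sbox k).filter (fun v => ¬ v.2.1 = 0)).card = (Sbox k).card :=
    Finset.card_filter_add_card_filter_not _
  -- b ≥ 1 part bijects with Sbox (k - 10)
  have hb1 : ((Sbox k).filter (fun v => ¬ v.2.1 = 0)).card = (Sbox (k - 10)).card := by
    apply Finset.card_nbij' (fun v => (v.1, v.2.1 - 1, v.2.2)) (fun v => (v.1, v.2.1 + 1, v.2.2))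
    · rintro ⟨a, b, c, d, e⟩ hv
      rw [mem_coe, mem_filter, mem_Sbox] at hv
      rw [mem_coe, mem_Sbox]
      dsimp only at *
      omega
    · rintro ⟨a, b, c, d, e⟩ hv
      rw [mem_coe, mem_Sbox] at hv
      rw [mem_coe, mem_filter, mem_Sbox]
      dsimp only at *
      refine ⟨⟨?_, ?_⟩, ?_⟩ <;> omega
    · rintro ⟨a, b, c, d, e⟩ hv
      rw [mem_coe, mem_filter, mem_Sbox] at hv
      dsimp only at *
      have hb : b - 1 + 1 = b := by omega
      simp [hb]
    · rintro ⟨a, b, c, d, e⟩ _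
      simp
  -- b = 0 part bijects with tri (k / 12)
  have hb0 : ((Sbox k).filter (fun v => v.2.1 = 0)).card = (tri (k / 12)).card := by
    apply Finset.card_nbij' (fun v => (v.2.2.1, v.2.2.2.1 + 3 * v.2.2.2.2))
      (fun p => ((k - (12 * p.1 + 14 * (p.2 % 3) + 36 * (p.2 / 3))) / 2, 0, p.1, p.2 % 3, p.2 / 3))
    · rintro ⟨a, b, c', d, e⟩ hv
      rw [mem_coe, mem_filter, mem_Sbox] at hv
      rw [mem_coe, mem_tri]
      dsimp only at *
      omega
    · rintro ⟨x, y⟩ hp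
      rw [mem_coe, mem_tri] at hp
      rw [mem_coe, mem_filter, mem_Sbox]
      dsimp only at *
      refine ⟨⟨?_, ?_⟩, ?_⟩ <;> omega
    · rintro ⟨a, b, c', d, e⟩ hv
      rw [mem_coe, mem_filter, mem_Sbox] at hv
      dsimp only at *
      obtain ⟨⟨heq, hd⟩, hb⟩ := hv
      have h1 : (d + 3 * e) % 3 = d := by omega
      have h2 : (d + 3 * e) / 3 = e := by omega
      have h3 : (k - (12 * c' + 14 * d + 36 * e)) / 2 = a := by omega
      simp only [h1, h2, h3, hb]
    · rintro ⟨x, y⟩ hp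
      rw [mem_coe, mem_tri] at hp
      dsimp only
      have h1 : y % 3 + 3 * (y / 3) = y := by omega
      simp [h1]
  -- put it together
  have htri := card_tri2 (k / 12)
  have hprod : (c k) * (c k + 1) = (k / 12 + 1) * (k / 12 + 2) := by
    rw [hc]
  rw [card_Sbox k r hr, card_Sbox (k - 10) r hr, ← hsplit, hb1, hb0, hprod]
  omega
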